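/- Let ε, μ : [0,1] → ℝ be continuous with μ(x) > 0 and ε(x) > 0 for all x, and let E ∈ ℝ. Suppose u, p, φ, q : [0,1] → ℝ are differentiable and satisfy u'(x) = μ(x)·p(x), p'(x) = −E·ε(x)·u(x), φ'(x) = μ(x)·q(x), q'(x) = −E·ε(x)·φ(x) − ε(x)·u(x) for all x ∈ [0,1], with u(0) = 0, φ(0) = 0, q(0) = 0, and u(1) = 0. Then p(1)·φ(1) = ∫₀¹ ε(x)·u(x)² dx. In particular, if u is not identically zero, then p(1)·φ(1) > 0, so both p(1) ≠ 0 and φ(1) ≠ 0. -/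

import Mathlib

/-- Flux–derivative identity: for a Dirichlet solution `u` of the photonic
equation on `[0,1]` with `u(1) = 0`, and `(φ, q)` the derivative of the
solution with respect to `E`, one has `p(1)·φ(1) = ∫₀¹ ε u²`; in particular if
`u ≢ 0` then `p(1)·φ(1) > 0`, so `p(1) ≠ 0` and `φ(1) ≠ 0`. -/
theorem dirichlet_flux_derivative_identity
    (ε μ : ℝ → ℝ)
    (hεc : ContinuousOn ε (Set.Icc 0 1)) (hμc : ContinuousOn μ (Set.Icc 0 1))
    (hεpos : ∀ x ∈ Set.Icc (0 : ℝ) 1, 0 < ε x)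
    (hμpos : ∀ x ∈ Set.Icc (0 : ℝ) 1, 0 < μ x)
    (E : ℝ)
    (u p φ q : ℝ → ℝ)
    (hu : ∀ x ∈ Set.Icc (0 : ℝ) 1, HasDerivAt u (μ x * p x) x)
    (hp : ∀ x ∈ Set.Icc (0 : ℝ) 1, HasDerivAt p (-E * ε x * u x) x)
    (hφ : ∀ x ∈ Set.Icc (0 : ℝ) 1, HasDerivAt φ (μ x * q x) x)
    (hq : ∀ x ∈ Set.Icc (0 : ℝ) 1,
      HasDerivAt q (-E * ε x * φ x - ε x * u x) x)
    (hu0 : u 0 = 0) (hφ0 : φ 0 = 0) (hq0 : q 0 = 0) (hu1 : u 1 = 0) :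
    p 1 * φ 1 = ∫ x in (0 : ℝ)..1, ε x * u x ^ 2 ∧
    ((∃ x ∈ Set.Icc (0 : ℝ) 1, u x ≠ 0) →
      0 < p 1 * φ 1 ∧ p 1 ≠ 0 ∧ φ 1 ≠ 0) := by
  set f : ℝ → ℝ := fun x => ε x * u x ^ 2 with hf
  have huc : ContinuousOn u (Set.Icc 0 1) := fun x hx =>
    (hu x hx).continuousAt.continuousWithinAt
  have hfc : ContinuousOn f (Set.Icc 0 1) := hεc.mul (huc.pow 2)
  have hfi : IntervalIntegrable f MeasureTheory.volume 0 1 := by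
    apply ContinuousOn.intervalIntegrable
    rwa [Set.uIcc_of_le (by norm_num : (0:ℝ) ≤ 1)]
  have hsubint : ∀ a b : ℝ, 0 ≤ a → a ≤ b → b ≤ 1 →
      IntervalIntegrable f MeasureTheory.volume a b := by
    intro a b ha hab hb
    apply hfi.mono_set
    rw [Set.uIcc_of_le (by norm_num : (0:ℝ) ≤ 1), Set.uIcc_of_le hab]
    exact Set.Icc_subset_Icc ha hb
  set W : ℝ → ℝ := fun x => p x * φ x - u x * q x with hW
  have hWd : ∀ x ∈ Set.uIcc (0 : ℝ) 1, HasDerivAt W (f x) x := by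
    intro x hx
    rw [Set.uIcc_of_le (by norm_num : (0:ℝ) ≤ 1)] at hx
    have := (((hp x hx).mul (hφ x hx)).sub ((hu x hx).mul (hq x hx)))
    refine this.congr_deriv ?_
    show _ = ε x * u x ^ 2
    ring
  have hFTC := intervalIntegral.integral_eq_sub_of_hasDerivAt hWd hfi
  have hmain : p 1 * φ 1 = ∫ x in (0 : ℝ)..1, f x := by
    rw [hFTC]
    simp [hW, hu0, hφ0, hq0, hu1]
  refine ⟨hmain, ?_⟩
  rintro ⟨x0, hx0, hux0⟩
  have hx0I : x0 ∈ Set.Ioo (0 : ℝ) 1 := by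
    rcases hx0 with ⟨h0, h1⟩
    constructor
    · rcases lt_or_eq_of_le h0 with h | h
      · exact h
      · exact absurd (h ▸ hu0) hux0
    · rcases lt_or_eq_of_le h1 with h | h
      · exact h
      · exact absurd (h ▸ hu1) hux0
  have hfx0 : 0 < f x0 := mul_pos (hεpos x0 hx0) (by positivity)
  have hfx0c : ContinuousAt f x0 :=
    (hfc.continuousWithinAt hx0).continuousAt (Icc_mem_nhds hx0I.1 hx0I.2)
  have hpos_nhds : {x | 0 < f x} ∩ Set.Ioo 0 1 ∈ nhds x0 := by
    refine Filter.inter_mem ?_ (Ioo_mem_nhds hx0I.1 hx0I.2)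
    exact hfx0c.eventually (eventually_gt_nhds hfx0)
  obtain ⟨c₀, d₀, hcd₀, hsub₀⟩ := mem_nhds_iff_exists_Ioo_subset.mp hpos_nhds
  set c : ℝ := max c₀ 0 with hc
  set d : ℝ := min d₀ 1 with hd
  have hx0cd : x0 ∈ Set.Ioo c d :=
    ⟨max_lt hcd₀.1 hx0I.1, lt_min hcd₀.2 hx0I.2⟩
  have hsub : Set.Ioo c d ⊆ {x | 0 < f x} ∩ Set.Ioo 0 1 := fun x hx =>
    hsub₀ ⟨lt_of_le_of_lt (le_max_left _ _) hx.1,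
           lt_of_lt_of_le hx.2 (min_le_left _ _)⟩
  have hc0 : 0 ≤ c := le_max_right _ _
  have hd1 : d ≤ 1 := min_le_right _ _
  have hcd' : c < d := lt_trans hx0cd.1 hx0cd.2
  have hnonneg : ∀ x ∈ Set.Icc (0:ℝ) 1, 0 ≤ f x := fun x hx =>
    mul_nonneg (hεpos x hx).le (sq_nonneg _)
  have h1 : 0 < ∫ x in c..d, f x := by
    apply intervalIntegral.intervalIntegral_pos_of_pos_on
    · exact hsubint c d hc0 hcd'.le hd1
    · intro x hx
      exact (hsub hx).1
    · exact hcd'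
  have hsplit : (∫ x in (0:ℝ)..1, f x)
      = (∫ x in (0:ℝ)..c, f x) + (∫ x in c..d, f x) + (∫ x in d..(1:ℝ), f x) := by
    rw [intervalIntegral.integral_add_adjacent_intervals
        (hsubint 0 c le_rfl hc0 (hcd'.le.trans hd1))
        (hsubint c d hc0 hcd'.le hd1),
      intervalIntegral.integral_add_adjacent_intervals
        (hsubint 0 d le_rfl (hc0.trans hcd'.le) hd1)
        (hsubint d 1 (hc0.trans hcd'.le) hd1 le_rfl)]
  have h2 : 0 ≤ ∫ x in (0:ℝ)..c, f x := by
    apply intervalIntegral.integral_nonneg hc0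
    intro x hx
    exact hnonneg x ⟨hx.1, le_trans hx.2 (le_trans hcd'.le hd1)⟩
  have h3 : 0 ≤ ∫ x in d..(1:ℝ), f x := by
    apply intervalIntegral.integral_nonneg hd1
    intro x hx
    exact hnonneg x ⟨le_trans (le_trans hc0 hcd'.le) hx.1, hx.2⟩
  have hpos : 0 < p 1 * φ 1 := by
    rw [hmain, hsplit]; linarith
  refine ⟨hpos, ?_, ?_⟩
  · intro h; rw [h, zero_mul] at hpos; exact lt_irrefl _ hpos
  · intro h; rw [h, mul_zero] at hpos; exact lt_irrefl _ hpos
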